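/- In the online pairwise-loss setting with ghost sample, whenever n > 2/(ε²c²), the symmetrization inequality holds: Pr_{Z^n∼𝒟^n}( (1/(n − c_n)) Σ_{t=c_n}^{n−1} [ℛ(h_{t−1}) − E_t[M_t]] ≥ ε ) ≤ 2 · Pr_{Z^n∼𝒟^n, Ξ^n∼𝒟^n}( (1/(n − c_n)) Σ_{t=c_n}^{n−1} [E_t[M̃_t] − E_t[M_t]] ≥ ε/2 ). -/

import Mathlib

open MeasureTheory Finset Real
open scoped ENNReal

noncomputable def pairLoss {X : Type*} [TopologicalSpace X] (φ : ℝ → ℝ → ℝ)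
    (h : BoundedContinuousFunction (X × X) ℝ) (z z' : X × ℝ) : ℝ :=
  φ (z.2 - z'.2) (h (z.1, z'.1))

noncomputable def risk {X : Type*} [TopologicalSpace X] [MeasurableSpace X]
    (D : Measure (X × ℝ)) (φ : ℝ → ℝ → ℝ)
    (h : BoundedContinuousFunction (X × X) ℝ) : ℝ :=
  ∫ z, ∫ z', pairLoss φ h z z' ∂D ∂D

noncomputable def samp {n : ℕ} [NeZero n] {α : Type*} (ω : Fin n → α) (i : ℕ) : α :=
  ω (Fin.ofNat n (i - 1))

/-- `E_t[M_t]`: the conditional expectation over `z_t` (given `z₁,…,z_{t−1}`) of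
`M_t = (1/(t−1)) Σ_{i=1}^{t−1} ℓ(h_{t−1}, z_t, z_i)`. -/
noncomputable def EtMt {X : Type*} [TopologicalSpace X] [MeasurableSpace X]
    (D : Measure (X × ℝ)) {n : ℕ} [NeZero n] (φ : ℝ → ℝ → ℝ)
    (hyp : ℕ → (Fin n → X × ℝ) → BoundedContinuousFunction (X × X) ℝ)
    (t : ℕ) (ω : Fin n → X × ℝ) : ℝ :=
  ∫ z, (1 / ((t : ℝ) - 1)) *
    ∑ i ∈ Icc 1 (t - 1), pairLoss φ (hyp (t - 1) ω) z (samp ω i) ∂D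

/-- `E_t[M̃_t]`: the conditional expectation over `z_t` of the ghost-sample statistic
`M̃_t = (1/(t−1)) Σ_{j=1}^{t−1} ℓ(h_{t−1}, z_t, ξ_j)`. -/
noncomputable def EtMtGhost {X : Type*} [TopologicalSpace X] [MeasurableSpace X]
    (D : Measure (X × ℝ)) {n : ℕ} [NeZero n] (φ : ℝ → ℝ → ℝ)
    (hyp : ℕ → (Fin n → X × ℝ) → BoundedContinuousFunction (X × X) ℝ)
    (t : ℕ) (ω ξ : Fin n → X × ℝ) : ℝ :=
  ∫ z, (1 / ((t : ℝ) - 1)) *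
    ∑ j ∈ Icc 1 (t - 1), pairLoss φ (hyp (t - 1) ω) z (samp ξ j) ∂D

set_option linter.unusedSectionVars false
set_option maxHeartbeats 1000000

section Aux


variable {X : Type*} [TopologicalSpace X] [MeasurableSpace X]
    [OpensMeasurableSpace X] [SecondCountableTopology X]
    {D : Measure (X × ℝ)} [IsProbabilityMeasure D]
    {φ : ℝ → ℝ → ℝ}


lemma pairLoss_mem_Icc (hφ01 : ∀ s t, φ s t ∈ Set.Icc (0 : ℝ) 1)
    (h : BoundedContinuousFunction (X × X) ℝ) (z z' : X × ℝ) :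
    pairLoss φ h z z' ∈ Set.Icc (0 : ℝ) 1 := hφ01 _ _

lemma meas_pairLoss (hφmeas : Measurable (Function.uncurry φ))
    (h : BoundedContinuousFunction (X × X) ℝ) :
    Measurable fun p : (X × ℝ) × (X × ℝ) => pairLoss φ h p.1 p.2 := by
  have h1 : Measurable fun p : (X × ℝ) × (X × ℝ) =>
      ((p.1.2 - p.2.2, h (p.1.1, p.2.1)) : ℝ × ℝ) :=
    (measurable_fst.snd.sub measurable_snd.snd).prodMk
      (h.continuous.measurable.comp (measurable_fst.fst.prodMk measurable_snd.fst))
  exact hφmeas.comp h1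

lemma integrable_pairLoss_left (hφ01 : ∀ s t, φ s t ∈ Set.Icc (0 : ℝ) 1)
    (hφmeas : Measurable (Function.uncurry φ))
    (h : BoundedContinuousFunction (X × X) ℝ) (w : X × ℝ) :
    Integrable (fun z => pairLoss φ h z w) D := by
  refine (integrable_const (1 : ℝ)).mono'
    (((meas_pairLoss hφmeas h).comp (measurable_id.prodMk measurable_const)).aestronglyMeasurable)
    (Filter.Eventually.of_forall fun z => ?_)
  have := pairLoss_mem_Icc hφ01 h z w
  rw [Real.norm_eq_abs, abs_le]
  constructor <;> [linarith [this.1]; exact this.2]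

/-- `u h w = ∫ z, ℓ(h, z, w)`. -/
noncomputable def uFun (D : Measure (X × ℝ)) (φ : ℝ → ℝ → ℝ)
    (h : BoundedContinuousFunction (X × X) ℝ) (w : X × ℝ) : ℝ :=
  ∫ z, pairLoss φ h z w ∂D

lemma uFun_mem_Icc (hφ01 : ∀ s t, φ s t ∈ Set.Icc (0 : ℝ) 1)
    (hφmeas : Measurable (Function.uncurry φ))
    (h : BoundedContinuousFunction (X × X) ℝ) (w : X × ℝ) :
    uFun D φ h w ∈ Set.Icc (0 : ℝ) 1 := by
  constructor
  · exact integral_nonneg fun z => (hφ01 _ _).1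
  · calc ∫ z, pairLoss φ h z w ∂D ≤ ∫ _z, (1 : ℝ) ∂D :=
          integral_mono (integrable_pairLoss_left hφ01 hφmeas h w) (integrable_const _)
            fun z => (hφ01 _ _).2
      _ = 1 := by simp

lemma meas_uFun (hφmeas : Measurable (Function.uncurry φ))
    (h : BoundedContinuousFunction (X × X) ℝ) :
    Measurable (uFun D φ h) := by
  have : StronglyMeasurable fun p : (X × ℝ) × (X × ℝ) => pairLoss φ h p.2 p.1 :=
    ((meas_pairLoss hφmeas h).comp measurable_swap).stronglyMeasurable
  exact this.integral_prod_right'.measurable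

lemma integrable_uncurry_pairLoss (hφ01 : ∀ s t, φ s t ∈ Set.Icc (0 : ℝ) 1)
    (hφmeas : Measurable (Function.uncurry φ))
    (h : BoundedContinuousFunction (X × X) ℝ) :
    Integrable (fun p : (X × ℝ) × (X × ℝ) => pairLoss φ h p.2 p.1) (D.prod D) := by
  refine (integrable_const (1 : ℝ)).mono'
    ((meas_pairLoss hφmeas h).comp measurable_swap).aestronglyMeasurable
    (Filter.Eventually.of_forall fun p => ?_)
  have := pairLoss_mem_Icc hφ01 h p.2 p.1
  rw [Real.norm_eq_abs, abs_le]
  constructor <;> [linarith [this.1]; exact this.2]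

lemma integral_uFun (hφ01 : ∀ s t, φ s t ∈ Set.Icc (0 : ℝ) 1)
    (hφmeas : Measurable (Function.uncurry φ))
    (h : BoundedContinuousFunction (X × X) ℝ) :
    ∫ w, uFun D φ h w ∂D = risk D φ h := by
  have hint : Integrable (Function.uncurry fun w z => pairLoss φ h z w) (D.prod D) :=
    integrable_uncurry_pairLoss hφ01 hφmeas h
  exact integral_integral_swap hint

lemma risk_mem_Icc (hφ01 : ∀ s t, φ s t ∈ Set.Icc (0 : ℝ) 1)
    (hφmeas : Measurable (Function.uncurry φ))
    (h : BoundedContinuousFunction (X × X) ℝ) :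
    risk D φ h ∈ Set.Icc (0 : ℝ) 1 := by
  rw [← integral_uFun hφ01 hφmeas h]
  constructor
  · exact integral_nonneg fun w => (uFun_mem_Icc hφ01 hφmeas h w).1
  · calc ∫ w, uFun D φ h w ∂D ≤ ∫ _w, (1 : ℝ) ∂D := by
          refine integral_mono ?_ (integrable_const _) fun w => (uFun_mem_Icc (D := D) hφ01 hφmeas h w).2
          refine (integrable_const (1 : ℝ)).mono'
            (meas_uFun (D := D) hφmeas h).aestronglyMeasurable
            (Filter.Eventually.of_forall fun w => ?_)
          have := uFun_mem_Icc (D := D) hφ01 hφmeas h w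
          rw [Real.norm_eq_abs, abs_le]
          constructor <;> [linarith [this.1]; exact this.2]
      _ = 1 := by simp

lemma integrable_uFun (hφ01 : ∀ s t, φ s t ∈ Set.Icc (0 : ℝ) 1)
    (hφmeas : Measurable (Function.uncurry φ))
    (h : BoundedContinuousFunction (X × X) ℝ) :
    Integrable (uFun D φ h) D := by
  refine (integrable_const (1 : ℝ)).mono'
    (meas_uFun (D := D) hφmeas h).aestronglyMeasurable
    (Filter.Eventually.of_forall fun w => ?_)
  have := uFun_mem_Icc (D := D) hφ01 hφmeas h w
  rw [Real.norm_eq_abs, abs_le]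
  constructor <;> [linarith [this.1]; exact this.2]

end Aux



lemma prod_eq_two_mul {α M : Type*} [Fintype α] [DecidableEq α] [CommMonoid M]
    (f : α → M) (x y : α) (hxy : x ≠ y) (hf : ∀ i, i ≠ x → i ≠ y → f i = 1) :
    ∏ i, f i = f x * f y := by
  have h1 : ({x, y} : Finset α) ⊆ Finset.univ := Finset.subset_univ _
  rw [← Finset.prod_subset h1 (fun i _ hi => by
    simp only [Finset.mem_insert, Finset.mem_singleton, not_or] at hi
    exact hf i hi.1 hi.2)]
  exact Finset.prod_pair hxy

lemma core_concentration {Z : Type*} [MeasurableSpace Z] (D : Measure Z)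
    [IsProbabilityMeasure D] (n : ℕ) (J : Finset ℕ) (e : ℕ → Fin n)
    (he : ∀ j ∈ J, ∀ j' ∈ J, j ≠ j' → e j ≠ e j')
    (F : ℕ → Z → ℝ) (v : ℕ → ℝ) (a : ℝ) (ha : 0 < a)
    (hmeas : ∀ j ∈ J, Measurable (F j))
    (hbd : ∀ j ∈ J, ∀ w, |F j w| ≤ 1)
    (h0 : ∀ j ∈ J, ∫ w, F j w ∂D = 0)
    (h2 : ∀ j ∈ J, ∫ w, (F j w) ^ 2 ∂D ≤ v j)
    (hv : ∑ j ∈ J, v j ≤ a ^ 2) :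
    (1 / 2 : ℝ≥0∞) ≤ (Measure.pi fun _ : Fin n => D)
      {ξ | -a ≤ ∑ j ∈ J, F j (ξ (e j))} := by
  classical
  letI : MeasureSpace Z := ⟨D⟩
  haveI : SigmaFinite (volume : Measure Z) := by
    change SigmaFinite D; infer_instance
  haveI : IsProbabilityMeasure (volume : Measure Z) := by
    change IsProbabilityMeasure D; infer_instance
  have hvolZ : (volume : Measure Z) = D := rfl
  set P : Measure (Fin n → Z) := Measure.pi fun _ : Fin n => D with hP
  have hvol : (volume : Measure (Fin n → Z)) = P := rfl
  haveI : IsProbabilityMeasure P := Measure.pi.instIsProbabilityMeasure _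
  -- basic integrability over D
  have hFint : ∀ j ∈ J, Integrable (F j) D := fun j hj =>
    (integrable_const (1 : ℝ)).mono' (hmeas j hj).aestronglyMeasurable
      (Filter.Eventually.of_forall fun w => by rw [Real.norm_eq_abs]; exact hbd j hj w)
  -- single-coordinate integrals over P
  have Eone : ∀ (G : Z → ℝ), Measurable G → ∀ j ∈ J,
      ∫ ξ, G (ξ (e j)) ∂P = ∫ w, G w ∂D := by
    intro G hG j hj
    have key := MeasureTheory.integral_fintype_prod_eq_prod (𝕜 := ℝ) (ι := Fin n) (μ := fun _ => (volume : Measure Z))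
      (E := fun _ => Z) (fun i w => if i = e j then G w else 1)
    change ∫ ξ, _ ∂P = _ at key
    have h1 : (fun ξ : Fin n → Z => ∏ i, if i = e j then G (ξ i) else 1)
        = fun ξ => G (ξ (e j)) := by
      funext ξ
      rw [Finset.prod_ite_eq' Finset.univ (e j) (fun i => G (ξ i))]
      simp
    rw [h1] at key
    rw [key]
    simp only [hvolZ]
    rw [Finset.prod_congr rfl (fun i (_ : i ∈ Finset.univ) =>
      show (∫ w, (if i = e j then G w else 1) ∂D)
      = if i = e j then ∫ w, G w ∂D else 1 by split_ifs <;> simp)]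
    rw [Finset.prod_ite_eq' Finset.univ (e j) (fun _ => ∫ w, G w ∂D)]
    simp
  -- two-coordinate products
  have Epair : ∀ j ∈ J, ∀ j' ∈ J, j ≠ j' →
      ∫ ξ, F j (ξ (e j)) * F j' (ξ (e j')) ∂P = (∫ w, F j w ∂D) * ∫ w, F j' w ∂D := by
    intro j hj j' hj' hne
    have hee : e j ≠ e j' := he j hj j' hj' hne
    have key := MeasureTheory.integral_fintype_prod_eq_prod (𝕜 := ℝ) (ι := Fin n) (μ := fun _ => (volume : Measure Z))
      (E := fun _ => Z)
      (fun i w => if i = e j then F j w else if i = e j' then F j' w else 1)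
    change ∫ ξ, _ ∂P = _ at key
    have h1 : (fun ξ : Fin n → Z =>
        ∏ i, if i = e j then F j (ξ i) else if i = e j' then F j' (ξ i) else 1)
        = fun ξ => F j (ξ (e j)) * F j' (ξ (e j')) := by
      funext ξ
      rw [prod_eq_two_mul _ (e j) (e j') hee (fun i h1 h2 => by simp [h1, h2])]
      simp [hee, Ne.symm hee]
    rw [h1] at key
    rw [key]
    simp only [hvolZ]
    rw [prod_eq_two_mul _ (e j) (e j') hee (fun i h1 h2 => by simp [h1, h2])]
    simp [Ne.symm hee]
  -- the statistic
  set T : (Fin n → Z) → ℝ := fun ξ => ∑ j ∈ J, F j (ξ (e j)) with hT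
  have hTmeas : Measurable T :=
    Finset.measurable_sum J fun j hj => (hmeas j hj).comp (measurable_pi_apply (e j))
  have hterm_meas : ∀ j ∈ J, Measurable fun ξ : Fin n → Z => F j (ξ (e j)) :=
    fun j hj => (hmeas j hj).comp (measurable_pi_apply (e j))
  have hterm_int : ∀ j ∈ J, Integrable (fun ξ : Fin n → Z => F j (ξ (e j))) P :=
    fun j hj => (integrable_const (1 : ℝ)).mono' (hterm_meas j hj).aestronglyMeasurable
      (Filter.Eventually.of_forall fun ξ => by rw [Real.norm_eq_abs]; exact hbd j hj _)
  have hTint : Integrable T P := integrable_finset_sum J hterm_int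
  -- mean of T is zero
  have hTmean : ∫ ξ, T ξ ∂P = 0 := by
    rw [hT, integral_finset_sum J hterm_int]
    refine Finset.sum_eq_zero fun j hj => ?_
    rw [Eone (F j) (hmeas j hj) j hj, h0 j hj]
  -- second moment
  have hpair_int : ∀ j ∈ J, ∀ j' ∈ J,
      Integrable (fun ξ : Fin n → Z => F j (ξ (e j)) * F j' (ξ (e j'))) P := by
    intro j hj j' hj'
    refine (integrable_const (1 : ℝ)).mono'
      ((hterm_meas j hj).mul (hterm_meas j' hj')).aestronglyMeasurable
      (Filter.Eventually.of_forall fun ξ => ?_)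
    rw [Real.norm_eq_abs, abs_mul]
    calc |F j (ξ (e j))| * |F j' (ξ (e j'))| ≤ 1 * 1 :=
          mul_le_mul (hbd j hj _) (hbd j' hj' _) (abs_nonneg _) zero_le_one
      _ = 1 := by ring
  have hTsq : ∫ ξ, (T ξ) ^ 2 ∂P ≤ a ^ 2 := by
    have hexp : ∀ ξ, (T ξ) ^ 2 = ∑ j ∈ J, ∑ j' ∈ J, F j (ξ (e j)) * F j' (ξ (e j')) := by
      intro ξ
      rw [hT, sq, Finset.sum_mul_sum]
    calc ∫ ξ, (T ξ) ^ 2 ∂P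
        = ∑ j ∈ J, ∑ j' ∈ J, ∫ ξ, F j (ξ (e j)) * F j' (ξ (e j')) ∂P := by
          rw [show (fun ξ => (T ξ) ^ 2) = fun ξ =>
            ∑ j ∈ J, ∑ j' ∈ J, F j (ξ (e j)) * F j' (ξ (e j')) from funext hexp]
          rw [integral_finset_sum J fun j hj =>
            integrable_finset_sum J fun j' hj' => hpair_int j hj j' hj']
          exact Finset.sum_congr rfl fun j hj =>
            integral_finset_sum J fun j' hj' => hpair_int j hj j' hj'
      _ = ∑ j ∈ J, ∫ w, (F j w) ^ 2 ∂D := by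
          refine Finset.sum_congr rfl fun j hj => ?_
          rw [Finset.sum_eq_single j (fun j' hj' hne => by
            rw [Epair j hj j' hj' (Ne.symm hne), h0 j hj, zero_mul])
            (fun h => absurd hj h)]
          have : ∀ ξ : Fin n → Z, F j (ξ (e j)) * F j (ξ (e j)) = (fun w => (F j w) ^ 2) (ξ (e j)) := by
            intro ξ; simp [sq]
          rw [show (fun ξ : Fin n → Z => F j (ξ (e j)) * F j (ξ (e j)))
            = fun ξ => (fun w => (F j w) ^ 2) (ξ (e j)) from funext this]
          exact Eone _ ((hmeas j hj).pow_const 2) j hj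
      _ ≤ ∑ j ∈ J, v j := Finset.sum_le_sum h2
      _ ≤ a ^ 2 := hv
  -- Markov / Chebyshev step
  have hTsq_int : Integrable (fun ξ => (T ξ) ^ 2) P := by
    refine (integrable_const ((J.card : ℝ) ^ 2)).mono'
      (hTmeas.pow_const 2).aestronglyMeasurable
      (Filter.Eventually.of_forall fun ξ => ?_)
    have hTb : |T ξ| ≤ (J.card : ℝ) := by
      calc |T ξ| ≤ ∑ j ∈ J, |F j (ξ (e j))| := Finset.abs_sum_le_sum_abs _ _
        _ ≤ ∑ _j ∈ J, (1 : ℝ) := Finset.sum_le_sum fun j hj => hbd j hj _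
        _ = (J.card : ℝ) := by simp
    rw [Real.norm_eq_abs, abs_pow]
    exact pow_le_pow_left₀ (abs_nonneg _) hTb 2
  have hq_eq : (fun ξ : Fin n → Z => (a - T ξ) ^ 2)
      = fun ξ => a ^ 2 - 2 * a * T ξ + (T ξ) ^ 2 := by
    funext ξ; ring
  have hqint : Integrable (fun ξ : Fin n → Z => (a - T ξ) ^ 2) P := by
    rw [hq_eq]
    exact ((integrable_const _).sub (hTint.const_mul _)).add hTsq_int
  have hint1 : Integrable (fun ξ : Fin n → Z => a ^ 2 - 2 * a * T ξ) P := by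
    have := (integrable_const (a ^ 2 : ℝ) (μ := P)).sub (hTint.const_mul (2 * a))
    exact this
  have hqval : ∫ ξ, (a - T ξ) ^ 2 ∂P ≤ 2 * a ^ 2 := by
    have e1 : ∫ ξ, (a ^ 2 - 2 * a * T ξ + (T ξ) ^ 2) ∂P
        = (∫ ξ, (a ^ 2 - 2 * a * T ξ) ∂P) + ∫ ξ, (T ξ) ^ 2 ∂P :=
      integral_add hint1 hTsq_int
    have e2 : ∫ ξ, (a ^ 2 - 2 * a * T ξ) ∂P
        = (∫ _ξ, (a ^ 2 : ℝ) ∂P) - ∫ ξ, 2 * a * T ξ ∂P :=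
      integral_sub (integrable_const _) (hTint.const_mul _)
    rw [hq_eq, e1, e2, integral_const_mul, hTmean, integral_const]
    simp only [probReal_univ, ENNReal.toReal_one, smul_eq_mul, one_mul, mul_zero, sub_zero]
    linarith [hTsq]
  have hMarkov := mul_meas_ge_le_integral_of_nonneg
    (Filter.Eventually.of_forall fun ξ : Fin n → Z => sq_nonneg (a - T ξ)) hqint (4 * a ^ 2)
  -- μ {q ≥ 4a²} ≤ 1/2
  have hq_half : P {ξ | 4 * a ^ 2 ≤ (a - T ξ) ^ 2} ≤ 1 / 2 := by
    have h4a : 0 < 4 * a ^ 2 := by positivity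
    have htoReal : (P {ξ | 4 * a ^ 2 ≤ (a - T ξ) ^ 2}).toReal ≤ 1 / 2 := by
      have hle : 4 * a ^ 2 * (P {ξ | 4 * a ^ 2 ≤ (a - T ξ) ^ 2}).toReal ≤ 2 * a ^ 2 :=
        le_trans hMarkov hqval
      nlinarith [ENNReal.toReal_nonneg (a := P {ξ | 4 * a ^ 2 ≤ (a - T ξ) ^ 2})]
    have hfin : P {ξ | 4 * a ^ 2 ≤ (a - T ξ) ^ 2} ≠ ⊤ := measure_ne_top _ _
    rw [← ENNReal.ofReal_toReal hfin]
    calc ENNReal.ofReal (P {ξ | 4 * a ^ 2 ≤ (a - T ξ) ^ 2}).toReal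
        ≤ ENNReal.ofReal (1 / 2) := ENNReal.ofReal_le_ofReal htoReal
      _ = 1 / 2 := by
          rw [ENNReal.ofReal_div_of_pos (by norm_num)]
          norm_num
  -- conclude
  have hsub : {ξ : Fin n → Z | T ξ < -a} ⊆ {ξ | 4 * a ^ 2 ≤ (a - T ξ) ^ 2} := by
    intro ξ hξ
    simp only [Set.mem_setOf_eq] at hξ ⊢
    have h1 : 2 * a < a - T ξ := by linarith
    nlinarith [mul_pos (sub_pos.mpr h1) (show (0 : ℝ) < a - T ξ + 2 * a by linarith)]
  have hcompl_le : P {ξ | T ξ < -a} ≤ 1 / 2 := le_trans (measure_mono hsub) hq_half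
  have hmeas_set : MeasurableSet {ξ | -a ≤ T ξ} := hTmeas measurableSet_Ici
  have hcompl_eq : {ξ | -a ≤ T ξ}ᶜ = {ξ : Fin n → Z | T ξ < -a} := by
    ext ξ; simp [not_le]
  have hmc : P {ξ : Fin n → Z | T ξ < -a} = 1 - P {ξ | -a ≤ T ξ} := by
    rw [← hcompl_eq, measure_compl hmeas_set (measure_ne_top P _), measure_univ]
  have hhalf : (1 : ℝ≥0∞) - P {ξ | -a ≤ T ξ} ≤ 1 / 2 := hmc ▸ hcompl_le
  have h1 : (1 : ℝ≥0∞) ≤ P {ξ | -a ≤ T ξ} + 1 / 2 := tsub_le_iff_left.mp hhalf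
  have h2 : (1 : ℝ≥0∞) - 1 / 2 ≤ P {ξ | -a ≤ T ξ} := tsub_le_iff_right.mpr h1
  rwa [ENNReal.sub_half ENNReal.one_ne_top] at h2

section OmegaConc


variable {X : Type*} [TopologicalSpace X] [MeasurableSpace X]
    [OpensMeasurableSpace X] [SecondCountableTopology X]
    {D : Measure (X × ℝ)} [IsProbabilityMeasure D]
    {φ : ℝ → ℝ → ℝ}

lemma omega_conc
    (hφ01 : ∀ s t, φ s t ∈ Set.Icc (0 : ℝ) 1)
    (hφmeas : Measurable (Function.uncurry φ))
    {n : ℕ} [NeZero n]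
    (hyp : ℕ → (Fin n → X × ℝ) → BoundedContinuousFunction (X × X) ℝ)
    (ω : Fin n → X × ℝ) (cn : ℕ) (hcn3 : 3 ≤ cn) (hcnn : cn ≤ n - 1)
    (ε : ℝ) (hε : 0 < ε) (hamax : 1 / ((cn : ℝ) - 1) ≤ ε ^ 2) :
    (1 / 2 : ℝ≥0∞) ≤ (Measure.pi fun _ : Fin n => D)
      {ξ | -(ε / 2) ≤ (1 / ((n : ℝ) - cn)) * ∑ t ∈ Icc cn (n - 1),
        (EtMtGhost D φ hyp t ω ξ - risk D φ (hyp (t - 1) ω))} := by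
  classical
  have hn4 : 4 ≤ n := by omega
  set I : Finset ℕ := Icc cn (n - 1) with hI
  set b : ℝ := 1 / ((n : ℝ) - cn) with hb
  set q : ℕ → ℝ := fun t => 1 / ((t : ℝ) - 1) with hq
  set h' : ℕ → BoundedContinuousFunction (X × X) ℝ := fun t => hyp (t - 1) ω with hh'
  set r : ℕ → ℝ := fun t => risk D φ (h' t) with hr
  set u' : ℕ → (X × ℝ) → ℝ := fun t => uFun D φ (h' t) with hu'
  set If : ℕ → Finset ℕ := fun j => I.filter (fun t => j ≤ t - 1) with hIf
  set F : ℕ → (X × ℝ) → ℝ := fun j w => b * ∑ t ∈ If j, q t * (u' t w - r t) with hF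
  set aj : ℕ → ℝ := fun j => b * ∑ t ∈ If j, q t with haj
  set J : Finset ℕ := Icc 1 (n - 2) with hJ
  set e : ℕ → Fin n := fun j => Fin.ofNat n (j - 1) with he'
  set amax : ℝ := 1 / ((cn : ℝ) - 1) with hamaxdef
  -- numeric facts
  have hcnR : (cn : ℝ) ≤ (n : ℝ) - 1 := by
    have : (cn : ℝ) ≤ ((n - 1 : ℕ) : ℝ) := Nat.cast_le.mpr hcnn
    rwa [Nat.cast_sub (by omega), Nat.cast_one] at this
  have hbpos : 0 < (n : ℝ) - cn := by linarith
  have hb0 : 0 ≤ b := by rw [hb]; positivity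
  have hcn1 : (2 : ℝ) ≤ (cn : ℝ) - 1 := by
    have : (3 : ℝ) ≤ (cn : ℝ) := by exact_mod_cast hcn3
    linarith
  have hamax_pos : 0 < amax := by rw [hamaxdef]; positivity
  have hamax_le : amax ≤ 1 / 2 := by
    rw [hamaxdef]
    rw [div_le_div_iff₀ (by linarith) (by norm_num)]
    linarith
  have htI : ∀ t ∈ I, cn ≤ t ∧ t ≤ n - 1 := fun t ht => Finset.mem_Icc.mp ht
  have htpos : ∀ t ∈ I, (2 : ℝ) ≤ (t : ℝ) - 1 := by
    intro t ht
    have h1 : cn ≤ t := (htI t ht).1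
    have : (cn : ℝ) ≤ (t : ℝ) := Nat.cast_le.mpr h1
    linarith
  have hq0 : ∀ t ∈ I, 0 ≤ q t := by
    intro t ht; rw [hq]
    have := htpos t ht
    positivity
  have hqle : ∀ t ∈ I, q t ≤ amax := by
    intro t ht
    rw [hq, hamaxdef]
    apply one_div_le_one_div_of_le (by linarith)
    have : (cn : ℝ) ≤ (t : ℝ) := Nat.cast_le.mpr (htI t ht).1
    linarith
  have hcardI : (I.card : ℝ) = (n : ℝ) - cn := by
    rw [hI, Nat.card_Icc]
    have h1 : n - 1 + 1 - cn = n - cn := by omega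
    rw [h1, Nat.cast_sub (by omega)]
  have hbcard : b * (I.card : ℝ) = 1 := by
    rw [hcardI, hb]
    field_simp
  -- aj facts
  have haj_nonneg : ∀ j, 0 ≤ aj j := by
    intro j
    exact mul_nonneg hb0 (Finset.sum_nonneg fun t ht =>
      hq0 t (Finset.mem_filter.mp ht).1)
  have haj_le : ∀ j, aj j ≤ amax := by
    intro j
    rw [haj]
    calc b * ∑ t ∈ If j, q t ≤ b * ∑ _t ∈ If j, amax := by
          apply mul_le_mul_of_nonneg_left _ hb0
          exact Finset.sum_le_sum fun t ht => hqle t (Finset.mem_filter.mp ht).1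
      _ = b * ((If j).card : ℝ) * amax := by rw [Finset.sum_const, nsmul_eq_mul]; ring
      _ ≤ b * (I.card : ℝ) * amax := by
          apply mul_le_mul_of_nonneg_right _ (le_of_lt hamax_pos)
          apply mul_le_mul_of_nonneg_left _ hb0
          exact Nat.cast_le.mpr (Finset.card_le_card (Finset.filter_subset _ _))
      _ = amax := by rw [hbcard]; ring
  have hsum_swap : ∀ (f : ℕ → ℕ → ℝ),
      ∑ j ∈ J, ∑ t ∈ If j, f j t = ∑ t ∈ I, ∑ j ∈ Icc 1 (t - 1), f j t := by
    intro f
    apply Finset.sum_comm'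
    intro j t
    simp only [hJ, hIf, hI, Finset.mem_Icc, Finset.mem_filter]
    omega
  have hsum_aj : ∑ j ∈ J, aj j = 1 := by
    have : ∑ j ∈ J, aj j = b * ∑ j ∈ J, ∑ t ∈ If j, q t := by
      rw [haj, Finset.mul_sum]
    rw [this, hsum_swap (fun _ t => q t)]
    have hinner : ∀ t ∈ I, ∑ _j ∈ Icc 1 (t - 1), q t = 1 := by
      intro t ht
      rw [Finset.sum_const, Nat.card_Icc]
      have h2 : (2:ℝ) ≤ (t:ℝ) - 1 := htpos t ht
      have hcast : ((t - 1 + 1 - 1 : ℕ) : ℝ) = (t : ℝ) - 1 := by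
        have h3 : 3 ≤ t := le_trans hcn3 (htI t ht).1
        have : t - 1 + 1 - 1 = t - 1 := by omega
        rw [this, Nat.cast_sub (by omega), Nat.cast_one]
      rw [nsmul_eq_mul, hcast, hq]
      field_simp
    rw [Finset.sum_congr rfl hinner, Finset.sum_const, nsmul_eq_mul, mul_one, hbcard]
  -- per-j moment bounds
  have hu01 : ∀ t w, u' t w ∈ Set.Icc (0:ℝ) 1 := fun t w => uFun_mem_Icc hφ01 hφmeas (h' t) w
  have hr01 : ∀ t, r t ∈ Set.Icc (0:ℝ) 1 := fun t => risk_mem_Icc hφ01 hφmeas (h' t)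
  have humeas : ∀ t, Measurable (u' t) := fun t => meas_uFun (D := D) hφmeas (h' t)
  have huint : ∀ t, Integrable (u' t) D := fun t => integrable_uFun hφ01 hφmeas (h' t)
  have hintu : ∀ t, ∫ w, u' t w ∂D = r t := fun t => integral_uFun hφ01 hφmeas (h' t)
  have hFmeas : ∀ j, Measurable (F j) := by
    intro j
    rw [hF]
    exact (Finset.measurable_sum (If j) fun t _ =>
      ((humeas t).sub_const (r t)).const_mul (q t)).const_mul b
  have hF0 : ∀ j, ∫ w, F j w ∂D = 0 := by
    intro j
    rw [hF]
    simp only []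
    rw [integral_const_mul]
    rw [integral_finset_sum (If j) (f := fun t w => q t * (u' t w - r t))
      (fun t _ => by exact (((huint t).sub (integrable_const (r t))).const_mul (q t)))]
    have : ∀ t ∈ If j, ∫ w, q t * (u' t w - r t) ∂D = 0 := by
      intro t _
      rw [integral_const_mul, integral_sub (huint t) (integrable_const _), hintu, integral_const]
      simp
    rw [Finset.sum_congr rfl this]
    simp
  have hFbd : ∀ j, ∀ w, |F j w| ≤ aj j := by
    intro j w
    rw [hF, haj, abs_le]
    constructor
    · have : ∀ t ∈ If j, q t * (0 - 1) ≤ q t * (u' t w - r t) := by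
        intro t ht
        apply mul_le_mul_of_nonneg_left _ (hq0 t (Finset.mem_filter.mp ht).1)
        have h1 := (hu01 t w).1
        have h2 := (hr01 t).2
        linarith
      have hsum := Finset.sum_le_sum this
      have : -(b * ∑ t ∈ If j, q t) ≤ b * ∑ t ∈ If j, q t * (u' t w - r t) := by
        have := mul_le_mul_of_nonneg_left hsum hb0
        calc -(b * ∑ t ∈ If j, q t) = b * ∑ t ∈ If j, q t * (0 - 1) := by
              rw [Finset.mul_sum, Finset.mul_sum, ← Finset.sum_neg_distrib]
              congr 1
              funext t
              ring
          _ ≤ _ := this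
      exact this
    · have : ∀ t ∈ If j, q t * (u' t w - r t) ≤ q t * (1 - 0) := by
        intro t ht
        apply mul_le_mul_of_nonneg_left _ (hq0 t (Finset.mem_filter.mp ht).1)
        have h1 := (hu01 t w).2
        have h2 := (hr01 t).1
        linarith
      have hsum := Finset.sum_le_sum this
      calc b * ∑ t ∈ If j, q t * (u' t w - r t) ≤ b * ∑ t ∈ If j, q t * (1 - 0) :=
            mul_le_mul_of_nonneg_left hsum hb0
        _ = b * ∑ t ∈ If j, q t := by
            congr 1
            apply Finset.sum_congr rfl
            intro t _
            ring
  have hFbd1 : ∀ j, ∀ w, |F j w| ≤ 1 := by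
    intro j w
    calc |F j w| ≤ aj j := hFbd j w
      _ ≤ amax := haj_le j
      _ ≤ 1 := by linarith [hamax_le]
  have hF2 : ∀ j, ∫ w, (F j w) ^ 2 ∂D ≤ aj j * amax / 4 := by
    intro j
    set W : (X × ℝ) → ℝ := fun w => b * ∑ t ∈ If j, q t * u' t w with hW
    set cj : ℝ := b * ∑ t ∈ If j, q t * r t with hcj
    have hFW : ∀ w, F j w = W w - cj := by
      intro w
      rw [hF, hW, hcj]
      simp only []
      rw [← mul_sub, ← Finset.sum_sub_distrib]
      congr 1
      apply Finset.sum_congr rfl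
      intro t _
      ring
    have hW0 : ∀ w, 0 ≤ W w := by
      intro w
      exact mul_nonneg hb0 (Finset.sum_nonneg fun t ht =>
        mul_nonneg (hq0 t (Finset.mem_filter.mp ht).1) (hu01 t w).1)
    have hWa : ∀ w, W w ≤ aj j := by
      intro w
      rw [hW, haj]
      apply mul_le_mul_of_nonneg_left _ hb0
      apply Finset.sum_le_sum
      intro t ht
      calc q t * u' t w ≤ q t * 1 :=
            mul_le_mul_of_nonneg_left (hu01 t w).2 (hq0 t (Finset.mem_filter.mp ht).1)
        _ = q t := mul_one _
    have hWmeas : Measurable W := by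
      rw [hW]
      exact (Finset.measurable_sum (If j) fun t _ =>
        (humeas t).const_mul (q t)).const_mul b
    have hWint : Integrable W D := by
      refine (integrable_const (aj j)).mono' hWmeas.aestronglyMeasurable
        (Filter.Eventually.of_forall fun w => ?_)
      rw [Real.norm_eq_abs, abs_of_nonneg (hW0 w)]
      exact hWa w
    have hIW : ∫ w, W w ∂D = cj := by
      rw [hW, hcj]
      simp only []
      rw [integral_const_mul, integral_finset_sum (If j) (f := fun t w => q t * u' t w)
        (fun t _ => by exact (huint t).const_mul (q t))]
      congr 1
      apply Finset.sum_congr rfl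
      intro t _
      rw [integral_const_mul, hintu]
    have hcj0 : 0 ≤ cj := by
      rw [← hIW]
      exact integral_nonneg hW0
    have hcja : cj ≤ aj j := by
      rw [← hIW]
      calc ∫ w, W w ∂D ≤ ∫ _w, aj j ∂D := integral_mono hWint (integrable_const _) hWa
        _ = aj j := by simp
    have hW2int : Integrable (fun w => (W w) ^ 2) D := by
      refine (integrable_const ((aj j) ^ 2)).mono' (hWmeas.pow_const 2).aestronglyMeasurable
        (Filter.Eventually.of_forall fun w => ?_)
      rw [Real.norm_eq_abs, abs_of_nonneg (sq_nonneg _)]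
      exact pow_le_pow_left₀ (hW0 w) (hWa w) 2
    have hW2le : ∫ w, (W w) ^ 2 ∂D ≤ aj j * cj := by
      calc ∫ w, (W w) ^ 2 ∂D ≤ ∫ w, aj j * W w ∂D := by
            apply integral_mono hW2int (hWint.const_mul _)
            intro w
            simp only [sq]
            exact mul_le_mul_of_nonneg_right (hWa w) (hW0 w)
        _ = aj j * cj := by rw [integral_const_mul, hIW]
    have hFsq_eq : (fun w => (F j w) ^ 2) = fun w => (W w) ^ 2 - 2 * cj * W w + cj ^ 2 := by
      funext w
      rw [hFW w]
      ring
    have hval : ∫ w, (F j w) ^ 2 ∂D = (∫ w, (W w) ^ 2 ∂D) - cj ^ 2 := by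
      have hint1 : Integrable (fun w => (W w) ^ 2 - 2 * cj * W w) D := by
        have := hW2int.sub (hWint.const_mul (2 * cj))
        exact this
      rw [hFsq_eq]
      have e1 : ∫ w, ((W w) ^ 2 - 2 * cj * W w + cj ^ 2) ∂D
          = (∫ w, ((W w) ^ 2 - 2 * cj * W w) ∂D) + ∫ _w, (cj ^ 2 : ℝ) ∂D :=
        integral_add hint1 (integrable_const _)
      have e2 : ∫ w, ((W w) ^ 2 - 2 * cj * W w) ∂D
          = (∫ w, (W w) ^ 2 ∂D) - ∫ w, 2 * cj * W w ∂D :=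
        integral_sub hW2int (hWint.const_mul _)
      rw [e1, e2, integral_const_mul, hIW, integral_const]
      simp only [probReal_univ, ENNReal.toReal_one, smul_eq_mul, one_mul]
      ring
    rw [hval]
    have h1 : (∫ w, (W w) ^ 2 ∂D) - cj ^ 2 ≤ aj j * cj - cj ^ 2 := by linarith [hW2le]
    have h2 : aj j * cj - cj ^ 2 ≤ (aj j) ^ 2 / 4 := by nlinarith [sq_nonneg (aj j - 2 * cj)]
    have h3 : (aj j) ^ 2 / 4 ≤ aj j * amax / 4 := by
      have := mul_le_mul_of_nonneg_left (haj_le j) (haj_nonneg j)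
      nlinarith
    linarith
  -- injectivity of coordinates
  have he : ∀ j ∈ J, ∀ j' ∈ J, j ≠ j' → e j ≠ e j' := by
    intro j hj j' hj' hne heq
    rw [hJ, Finset.mem_Icc] at hj hj'
    have hj1 : j - 1 < n := by omega
    have hj2 : j' - 1 < n := by omega
    have h1 := congrArg Fin.val heq
    simp only [he', Fin.val_ofNat] at h1
    rw [Nat.mod_eq_of_lt hj1, Nat.mod_eq_of_lt hj2] at h1
    omega
  -- the T identity
  have hghost : ∀ ξ : Fin n → X × ℝ, ∀ t ∈ I,
      EtMtGhost D φ hyp t ω ξ = q t * ∑ j ∈ Icc 1 (t - 1), u' t (ξ (e j)) := by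
    intro ξ t _
    show (∫ z, (1 / ((t : ℝ) - 1)) *
        ∑ j ∈ Icc 1 (t - 1), pairLoss φ (hyp (t - 1) ω) z (samp ξ j) ∂D) = _
    rw [show (fun z => (1 / ((t : ℝ) - 1)) *
        ∑ j ∈ Icc 1 (t - 1), pairLoss φ (hyp (t - 1) ω) z (samp ξ j))
      = fun z => q t * ∑ j ∈ Icc 1 (t - 1), pairLoss φ (h' t) z (samp ξ j) from rfl]
    rw [integral_const_mul]
    rw [integral_finset_sum (Icc 1 (t - 1))
      (f := fun j z => pairLoss φ (h' t) z (samp ξ j))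
      (fun j _ => integrable_pairLoss_left hφ01 hφmeas (h' t) (samp ξ j))]
    rfl
  have hTid : ∀ ξ : Fin n → X × ℝ,
      ∑ j ∈ J, F j (ξ (e j)) = b * ∑ t ∈ I, (EtMtGhost D φ hyp t ω ξ - r t) := by
    intro ξ
    have step1 : ∑ j ∈ J, F j (ξ (e j))
        = b * ∑ j ∈ J, ∑ t ∈ If j, q t * (u' t (ξ (e j)) - r t) := by
      rw [hF, Finset.mul_sum]
    have step2 : ∑ j ∈ J, ∑ t ∈ If j, q t * (u' t (ξ (e j)) - r t)
        = ∑ t ∈ I, ∑ j ∈ Icc 1 (t - 1), q t * (u' t (ξ (e j)) - r t) :=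
      hsum_swap (fun j t => q t * (u' t (ξ (e j)) - r t))
    have step3 : ∀ t ∈ I, ∑ j ∈ Icc 1 (t - 1), q t * (u' t (ξ (e j)) - r t)
        = EtMtGhost D φ hyp t ω ξ - r t := by
      intro t ht
      have hcardt : ((Icc 1 (t - 1)).card : ℝ) = (t : ℝ) - 1 := by
        rw [Nat.card_Icc]
        have h3 : 3 ≤ t := le_trans hcn3 (htI t ht).1
        have : t - 1 + 1 - 1 = t - 1 := by omega
        rw [this, Nat.cast_sub (by omega), Nat.cast_one]
      have hqt : q t * ((t : ℝ) - 1) = 1 := by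
        rw [hq]
        have := htpos t ht
        field_simp
      calc ∑ j ∈ Icc 1 (t - 1), q t * (u' t (ξ (e j)) - r t)
          = q t * ∑ j ∈ Icc 1 (t - 1), u' t (ξ (e j))
            - q t * (((Icc 1 (t - 1)).card : ℝ) * r t) := by
            rw [show q t * (((Icc 1 (t-1)).card : ℝ) * r t)
              = ∑ _j ∈ Icc 1 (t-1), q t * r t by rw [Finset.sum_const, nsmul_eq_mul]; ring]
            rw [Finset.mul_sum, ← Finset.sum_sub_distrib]
            apply Finset.sum_congr rfl
            intro j _
            ring
        _ = EtMtGhost D φ hyp t ω ξ - r t := by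
            rw [hghost ξ t ht, hcardt]
            have : q t * (((t:ℝ) - 1) * r t) = r t := by
              rw [← mul_assoc, hqt, one_mul]
            rw [this]
    rw [step1, step2, Finset.sum_congr rfl step3]
  -- apply core
  have hv : ∑ j ∈ J, aj j * amax / 4 ≤ (ε / 2) ^ 2 := by
    have : ∑ j ∈ J, aj j * amax / 4 = (∑ j ∈ J, aj j) * amax / 4 := by
      rw [← Finset.sum_div, ← Finset.sum_mul]
    rw [this, hsum_aj, one_mul]
    have : amax ≤ ε ^ 2 := hamax
    nlinarith
  have hcore := core_concentration D n J e he F (fun j => aj j * amax / 4) (ε / 2)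
    (by linarith) (fun j _ => hFmeas j) (fun j _ w => hFbd1 j w)
    (fun j _ => hF0 j) (fun j _ => hF2 j) hv
  have hseteq : {ξ : Fin n → X × ℝ | -(ε / 2) ≤ ∑ j ∈ J, F j (ξ (e j))}
      = {ξ | -(ε / 2) ≤ (1 / ((n : ℝ) - cn)) * ∑ t ∈ Icc cn (n - 1),
          (EtMtGhost D φ hyp t ω ξ - risk D φ (hyp (t - 1) ω))} := by
    ext ξ
    simp only [Set.mem_setOf_eq]
    rw [hTid ξ]
  rw [← hseteq]
  exact hcore

end OmegaConc

section Main

lemma EtMt_nonneg {X : Type*} [TopologicalSpace X] [MeasurableSpace X]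
    {D : Measure (X × ℝ)} {φ : ℝ → ℝ → ℝ}
    (hφ01 : ∀ s t, φ s t ∈ Set.Icc (0 : ℝ) 1)
    {n : ℕ} [NeZero n]
    (hyp : ℕ → (Fin n → X × ℝ) → BoundedContinuousFunction (X × X) ℝ)
    (t : ℕ) (ht : 1 ≤ t) (ω : Fin n → X × ℝ) :
    0 ≤ EtMt D φ hyp t ω := by
  apply integral_nonneg
  intro z
  apply mul_nonneg
  · apply one_div_nonneg.mpr
    have : (1 : ℝ) ≤ (t : ℝ) := by exact_mod_cast ht
    linarith
  · exact Finset.sum_nonneg fun i _ => (hφ01 _ _).1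

theorem stmt_1 {X : Type*} [TopologicalSpace X] [MeasurableSpace X]
    [OpensMeasurableSpace X] [SecondCountableTopology X]
    (D : Measure (X × ℝ)) [IsProbabilityMeasure D]
    (H : Set (BoundedContinuousFunction (X × X) ℝ)) (hH : IsCompact H)
    (φ : ℝ → ℝ → ℝ) (L : NNReal)
    (hφ01 : ∀ s t, φ s t ∈ Set.Icc (0 : ℝ) 1)
    (hφlip : ∀ s, LipschitzWith L (φ s))
    (hφmeas : Measurable (Function.uncurry φ))
    (c : ℝ) (hc : c ∈ Set.Ioo (0 : ℝ) 1) (ε : ℝ) (hε : 0 < ε)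
    (n : ℕ) [NeZero n] (hn : 2 / (ε ^ 2 * c ^ 2) < (n : ℝ))
    (hyp : ℕ → (Fin n → X × ℝ) → BoundedContinuousFunction (X × X) ℝ)
    (hhypH : ∀ t ω, hyp t ω ∈ H)
    (hpre : ∀ t (ω ω' : Fin n → X × ℝ),
      (∀ i : Fin n, (i : ℕ) < t → ω i = ω' i) → hyp t ω = hyp t ω') :
    (Measure.pi fun _ : Fin n => D)
      {ω | ε ≤ (1 / ((n : ℝ) - ⌈c * n⌉₊)) *
        ∑ t ∈ Icc (⌈c * n⌉₊) (n - 1),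
          (risk D φ (hyp (t - 1) ω) - EtMt D φ hyp t ω)} ≤
    2 * ((Measure.pi fun _ : Fin n => D).prod (Measure.pi fun _ : Fin n => D))
      {p | ε / 2 ≤ (1 / ((n : ℝ) - ⌈c * n⌉₊)) *
        ∑ t ∈ Icc (⌈c * n⌉₊) (n - 1),
          (EtMtGhost D φ hyp t p.1 p.2 - EtMt D φ hyp t p.1)} := by
  classical
  obtain ⟨hc0, hc1⟩ := hc
  have hn1 : 1 ≤ n := Nat.one_le_iff_ne_zero.mpr (NeZero.ne n)
  have hn0 : (0 : ℝ) < n := by exact_mod_cast hn1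
  set μ : Measure (Fin n → X × ℝ) := Measure.pi fun _ : Fin n => D with hμ
  set cn : ℕ := ⌈c * (n : ℝ)⌉₊ with hcndef
  have hcnlen : cn ≤ n := by
    rw [hcndef]
    apply Nat.ceil_le.mpr
    nlinarith
  have hcn1 : 1 ≤ cn := by
    rw [hcndef]
    apply Nat.one_le_ceil_iff.mpr
    positivity
  by_cases hcnn : cn ≤ n - 1
  swap
  · -- degenerate case: cn = n, coefficient is 1/0 = 0
    have hceq : cn = n := by omega
    have hzero : (1 : ℝ) / ((n : ℝ) - (cn : ℕ)) = 0 := by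
      rw [hceq]
      simp
    have hA : {ω : Fin n → X × ℝ | ε ≤ (1 / ((n : ℝ) - cn)) *
        ∑ t ∈ Icc cn (n - 1),
          (risk D φ (hyp (t - 1) ω) - EtMt D φ hyp t ω)} = ∅ := by
      ext ω
      simp only [Set.mem_setOf_eq, Set.mem_empty_iff_false, iff_false, not_le]
      rw [hzero, zero_mul]
      exact hε
    rw [hA, measure_empty]
    positivity
  -- now cn ≤ n - 1
  have hcnR1 : (cn : ℝ) ≤ (n : ℝ) - 1 := by
    have : (cn : ℝ) ≤ ((n - 1 : ℕ) : ℝ) := Nat.cast_le.mpr hcnn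
    rwa [Nat.cast_sub hn1, Nat.cast_one] at this
  have hbpos : (0 : ℝ) < (n : ℝ) - cn := by linarith
  have hb0 : (0 : ℝ) ≤ 1 / ((n : ℝ) - cn) := by positivity
  have hcardI : ((Icc cn (n - 1)).card : ℝ) = (n : ℝ) - cn := by
    rw [Nat.card_Icc]
    have h1 : n - 1 + 1 - cn = n - cn := by omega
    rw [h1, Nat.cast_sub hcnlen]
  by_cases hε1 : ε ≤ 1
  swap
  · -- ε > 1: LHS event is empty since the statistic is at most 1
    have hA : {ω : Fin n → X × ℝ | ε ≤ (1 / ((n : ℝ) - cn)) *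
        ∑ t ∈ Icc cn (n - 1),
          (risk D φ (hyp (t - 1) ω) - EtMt D φ hyp t ω)} = ∅ := by
      ext ω
      simp only [Set.mem_setOf_eq, Set.mem_empty_iff_false, iff_false, not_le]
      have hterm : ∀ t ∈ Icc cn (n - 1),
          risk D φ (hyp (t - 1) ω) - EtMt D φ hyp t ω ≤ 1 := by
        intro t ht
        have h1 := (risk_mem_Icc (D := D) hφ01 hφmeas (hyp (t - 1) ω)).2
        have h2 := EtMt_nonneg (D := D) hφ01 hyp t
          (le_trans hcn1 (Finset.mem_Icc.mp ht).1) ω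
        linarith
      have hsum : ∑ t ∈ Icc cn (n - 1),
          (risk D φ (hyp (t - 1) ω) - EtMt D φ hyp t ω) ≤ ((Icc cn (n-1)).card : ℝ) := by
        calc ∑ t ∈ Icc cn (n - 1), (risk D φ (hyp (t - 1) ω) - EtMt D φ hyp t ω)
            ≤ ∑ _t ∈ Icc cn (n - 1), (1 : ℝ) := Finset.sum_le_sum hterm
          _ = ((Icc cn (n-1)).card : ℝ) := by simp
      calc (1 / ((n : ℝ) - cn)) * ∑ t ∈ Icc cn (n - 1),
            (risk D φ (hyp (t - 1) ω) - EtMt D φ hyp t ω)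
          ≤ (1 / ((n : ℝ) - cn)) * ((Icc cn (n-1)).card : ℝ) :=
            mul_le_mul_of_nonneg_left hsum hb0
        _ = 1 := by rw [hcardI]; field_simp
        _ < ε := by linarith
    rw [hA, measure_empty]
    positivity
  -- main case : ε ≤ 1 and cn ≤ n - 1
  have h2lt : 2 < ε ^ 2 * c ^ 2 * (n : ℝ) := by
    rw [div_lt_iff₀ (by positivity)] at hn
    linarith
  have hcnR : c * n ≤ (cn : ℝ) := Nat.le_ceil _
  have hec : ε ^ 2 * c ≤ 1 := by nlinarith
  have hcn_gt2 : (2 : ℝ) < (cn : ℝ) := by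
    nlinarith [mul_le_mul_of_nonneg_right hec (mul_nonneg hc0.le hn0.le)]
  have hcn3 : 3 ≤ cn := by
    have : 2 < cn := by exact_mod_cast hcn_gt2
    omega
  have hamax : 1 / ((cn : ℝ) - 1) ≤ ε ^ 2 := by
    rw [div_le_iff₀ (by linarith)]
    have h3 : 2 < ε ^ 2 * (c * n) := by nlinarith
    nlinarith [mul_le_mul_of_nonneg_left hcnR (sq_nonneg ε)]
  -- measurable hull of the ghost event
  set B : Set ((Fin n → X × ℝ) × (Fin n → X × ℝ)) :=
    {p | ε / 2 ≤ (1 / ((n : ℝ) - cn)) * ∑ t ∈ Icc cn (n - 1),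
      (EtMtGhost D φ hyp t p.1 p.2 - EtMt D φ hyp t p.1)} with hB
  set B' : Set ((Fin n → X × ℝ) × (Fin n → X × ℝ)) := toMeasurable (μ.prod μ) B with hB'
  have hB'meas : MeasurableSet B' := measurableSet_toMeasurable _ _
  have hBB' : B ⊆ B' := subset_toMeasurable _ _
  have hslice_meas : Measurable fun ω => μ (Prod.mk ω ⁻¹' B') :=
    measurable_measure_prodMk_left hB'meas
  have hA_sub : {ω : Fin n → X × ℝ | ε ≤ (1 / ((n : ℝ) - cn)) *
        ∑ t ∈ Icc cn (n - 1),
          (risk D φ (hyp (t - 1) ω) - EtMt D φ hyp t ω)}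
      ⊆ {ω | 1 / 2 ≤ μ (Prod.mk ω ⁻¹' B')} := by
    intro ω hω
    simp only [Set.mem_setOf_eq] at hω ⊢
    have hconc := omega_conc (D := D) hφ01 hφmeas hyp ω cn hcn3 hcnn ε hε hamax
    refine le_trans hconc (measure_mono ?_)
    intro ξ hξ
    simp only [Set.mem_setOf_eq] at hξ
    apply hBB'
    show ε / 2 ≤ (1 / ((n : ℝ) - cn)) * ∑ t ∈ Icc cn (n - 1),
      (EtMtGhost D φ hyp t ω ξ - EtMt D φ hyp t ω)
    have hsplit : (1 / ((n : ℝ) - cn)) * ∑ t ∈ Icc cn (n - 1),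
        (EtMtGhost D φ hyp t ω ξ - EtMt D φ hyp t ω)
        = (1 / ((n : ℝ) - cn)) * ∑ t ∈ Icc cn (n - 1),
            (risk D φ (hyp (t - 1) ω) - EtMt D φ hyp t ω)
          + (1 / ((n : ℝ) - cn)) * ∑ t ∈ Icc cn (n - 1),
            (EtMtGhost D φ hyp t ω ξ - risk D φ (hyp (t - 1) ω)) := by
      rw [← mul_add, ← Finset.sum_add_distrib]
      congr 1
      apply Finset.sum_congr rfl
      intro t _
      ring
    rw [hsplit]
    linarith
  calc μ {ω : Fin n → X × ℝ | ε ≤ (1 / ((n : ℝ) - cn)) *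
        ∑ t ∈ Icc cn (n - 1),
          (risk D φ (hyp (t - 1) ω) - EtMt D φ hyp t ω)}
      ≤ μ {ω | 1 / 2 ≤ μ (Prod.mk ω ⁻¹' B')} := measure_mono hA_sub
    _ ≤ (∫⁻ ω, μ (Prod.mk ω ⁻¹' B') ∂μ) / (1 / 2) :=
        meas_ge_le_lintegral_div hslice_meas.aemeasurable (by norm_num) (by norm_num)
    _ = ((μ.prod μ) B') / (1 / 2) := by rw [← Measure.prod_apply hB'meas]
    _ = ((μ.prod μ) B) / (1 / 2) := by rw [hB', measure_toMeasurable]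
    _ = 2 * (μ.prod μ) B := by
        rw [one_div, div_eq_mul_inv, inv_inv, mul_comm]

end Main
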